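/- For every integer n ≥ 1 and every real x > 0, the strict inequality P_n(x) > (1 + x)^{n − 3/2} holds; that is, the Taylor polynomial of order n−1 at 0 of the function x ↦ (1+x)^{n−3/2} strictly exceeds the function itself for all x > 0. -/

import Mathlib

open Finset

/-- The generalized binomial coefficient `C(α, ℓ) = α(α−1)⋯(α−ℓ+1)/ℓ!`. -/
noncomputable def genChoose (α : ℝ) (ℓ : ℕ) : ℝ :=
  (∏ j ∈ Finset.range ℓ, (α - j)) / (Nat.factorial ℓ)

/-- The polynomial `P_n(X) = ∑_{ℓ=0}^{n−1} C(n−3/2, ℓ) X^ℓ`,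
the Taylor polynomial of order `n−1` at `0` of `x ↦ (1+x)^{n−3/2}`. -/
noncomputable def Ppoly (n : ℕ) (x : ℝ) : ℝ :=
  ∑ ℓ ∈ Finset.range n, genChoose ((n : ℝ) - 3/2) ℓ * x ^ ℓ

lemma genChoose_zero (α : ℝ) : genChoose α 0 = 1 := by simp [genChoose]

lemma genChoose_succ_mul (α : ℝ) (k : ℕ) :
    ((k : ℝ) + 1) * genChoose α (k + 1) = α * genChoose (α - 1) k := by
  have h : ∏ j ∈ Finset.range (k + 1), (α - j) =
      (∏ j ∈ Finset.range k, ((α - 1) - j)) * α := by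
    rw [Finset.prod_range_succ']
    simp only [Nat.cast_zero, sub_zero, Nat.cast_add, Nat.cast_one]
    congr 1
    apply Finset.prod_congr rfl
    intro j _
    ring
  unfold genChoose
  rw [h, Nat.factorial_succ]
  have hk : (Nat.factorial k : ℝ) ≠ 0 := by positivity
  push_cast
  field_simp

lemma Ppoly_zero (n : ℕ) : Ppoly n 0 = 1 ∨ n = 0 := by
  cases n with
  | zero => exact Or.inr rfl
  | succ m =>
    left
    unfold Ppoly
    rw [Finset.sum_range_succ']
    simp [genChoose_zero]

lemma hasDerivAt_Ppoly (n : ℕ) (x : ℝ) :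
    HasDerivAt (fun y => Ppoly (n + 1) y) (((n : ℝ) + 1 - 3/2) * Ppoly n x) x := by
  have h : HasDerivAt (fun y => Ppoly (n + 1) y)
      (∑ ℓ ∈ Finset.range (n + 1),
        genChoose (((n : ℕ) + 1 : ℝ) - 3/2) ℓ * ((ℓ : ℝ) * x ^ (ℓ - 1))) x := by
    have := HasDerivAt.sum (u := Finset.range (n + 1))
      (A := fun ℓ y => genChoose (((n : ℕ) + 1 : ℝ) - 3/2) ℓ * y ^ ℓ)
      (A' := fun ℓ => genChoose (((n : ℕ) + 1 : ℝ) - 3/2) ℓ * ((ℓ : ℝ) * x ^ (ℓ - 1)))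
      (fun ℓ _ => (hasDerivAt_pow ℓ x).const_mul _)
    convert this using 2
    · rfl
    · rfl
    rw [Finset.sum_apply]
    unfold Ppoly
    push_cast
    ring_nf
    exact Finset.sum_congr rfl fun _ _ => mul_comm _ _
  convert h using 1
  rw [Finset.sum_range_succ']
  simp only [Nat.cast_zero, zero_mul, mul_zero, add_zero]
  unfold Ppoly
  rw [Finset.mul_sum]
  apply Finset.sum_congr rfl
  intro i _
  symm
  have key := genChoose_succ_mul (((n : ℕ) + 1 : ℝ) - 3/2) i
  have hα : ((n : ℕ) + 1 : ℝ) - 3/2 - 1 = (n : ℝ) - 3/2 := by ring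
  rw [hα] at key
  push_cast
  calc genChoose ((n : ℝ) + 1 - 3/2) (i + 1) * (((i : ℝ) + 1) * x ^ i)
      = (((i : ℝ) + 1) * genChoose ((n : ℝ) + 1 - 3/2) (i + 1)) * x ^ i := by ring
    _ = (((n : ℝ) + 1 - 3/2) * genChoose ((n : ℝ) - 3/2) i) * x ^ i := by
        rw [← key]
    _ = ((n : ℝ) + 1 - 3/2) * (genChoose ((n : ℝ) - 3/2) i * x ^ i) := by ring

lemma key_ineq : ∀ n : ℕ, 1 ≤ n → ∀ x : ℝ, 0 < x →
    (1 + x) ^ ((n : ℝ) - 3/2) < Ppoly n x := by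
  intro n
  induction n with
  | zero => omega
  | succ m ih =>
    intro _ x hx
    rcases Nat.eq_zero_or_pos m with hm | hm
    · subst hm
      have h1 : Ppoly 1 x = 1 := by
        unfold Ppoly
        simp [genChoose_zero]
      rw [h1]
      have : ((1 : ℕ) : ℝ) - 3/2 = -(1/2 : ℝ) := by norm_num
      rw [this]
      apply Real.rpow_lt_one_of_one_lt_of_neg (by linarith) (by norm_num)
    · -- m ≥ 1, induction step
      set α : ℝ := ((m : ℝ) + 1 - 3/2) with hαdef
      have hαpos : 0 < α := by
        have : (1 : ℝ) ≤ m := by exact_mod_cast hm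
        simp only [hαdef]; linarith
      set F : ℝ → ℝ := fun y => Ppoly (m + 1) y - (1 + y) ^ α with hF
      have hF0 : F 0 = 0 := by
        simp only [hF]
        rcases Ppoly_zero (m + 1) with h | h
        · simp [h]
        · omega
      have hderiv : ∀ y ∈ Set.Ioi (0 : ℝ), HasDerivAt F
          (α * (Ppoly m y - (1 + y) ^ ((m : ℝ) - 3/2))) y := by
        intro y hy
        have hy' : (0 : ℝ) < y := hy
        have h1 : HasDerivAt (fun y : ℝ => (1 + y) ^ α) (α * (1 + y) ^ (α - 1)) y := by
          have hadd : HasDerivAt (fun y : ℝ => 1 + y) 1 y := (hasDerivAt_id y).const_add 1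
          have := hadd.rpow_const (p := α) (Or.inl (by positivity))
          simpa using this
        have h2 := hasDerivAt_Ppoly m y
        have hα1 : α - 1 = (m : ℝ) - 3/2 := by simp only [hαdef]; ring
        rw [hα1] at h1
        have := h2.sub h1
        convert this using 1
        · rfl
        · rfl
        · rfl
        simp only [hαdef]; ring
      have hmono : StrictMonoOn F (Set.Ici (0 : ℝ)) := by
        apply strictMonoOn_of_deriv_pos (convex_Ici 0)
        · -- continuity on Ici 0
          apply ContinuousOn.sub
          · exact (Continuous.continuousOn (by
              unfold Ppoly
              exact continuous_finset_sum _ fun i _ => continuous_const.mul (continuous_pow i)))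
          · apply ContinuousOn.rpow_const
            · exact (continuous_const.add continuous_id).continuousOn
            · intro y hy
              have : (0 : ℝ) ≤ y := hy
              left; positivity
        · intro y hy
          rw [interior_Ici] at hy
          rw [(hderiv y hy).deriv]
          have hlt := ih hm y hy
          have : 0 < Ppoly m y - (1 + y) ^ ((m : ℝ) - 3/2) := by linarith
          positivity
      have := hmono (Set.self_mem_Ici) (Set.mem_Ici.mpr hx.le) hx
      rw [hF0] at this
      simp only [hF] at this
      push_cast
      linarith


theorem stmt8 (n : ℕ) (hn : 1 ≤ n) (x : ℝ) (hx : 0 < x) :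
    (1 + x) ^ ((n : ℝ) - 3/2) < Ppoly n x :=
  key_ineq n hn x hx
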